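/- Let L ∈ [0,∞) and suppose E[X^m e^{LX}] < ∞ for every m ∈ ℕ. Then for any finite family of pairs (l_i, r_i), i ∈ I, with l_i ∈ [0,L] and r_i ∈ ℕ, one has ∏_{i∈I} G(l_i, r_i) ≤ G(L, ∑_{i∈I} r_i). -/

import Mathlib

open MeasureTheory

/-- Chebyshev correlation inequality (integral form). -/
lemma cheb_aux {Ω : Type*} [MeasurableSpace Ω] {P : Measure Ω} [SigmaFinite P]
    {f g w : Ω → ℝ} (hw : ∀ ω, 0 ≤ w ω)
    (hmono : ∀ ω ω', 0 ≤ (f ω - f ω') * (g ω - g ω'))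
    (h1 : Integrable w P) (hf : Integrable (fun ω => f ω * w ω) P)
    (hg : Integrable (fun ω => g ω * w ω) P)
    (hfg : Integrable (fun ω => f ω * g ω * w ω) P) :
    (∫ ω, f ω * w ω ∂P) * ∫ ω, g ω * w ω ∂P ≤
      (∫ ω, f ω * g ω * w ω ∂P) * ∫ ω, w ω ∂P := by
  have key : 0 ≤ ∫ p : Ω × Ω,
      (f p.1 - f p.2) * (g p.1 - g p.2) * (w p.1 * w p.2) ∂(P.prod P) :=
    integral_nonneg fun p => mul_nonneg (hmono _ _) (mul_nonneg (hw _) (hw _))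
  have hA : Integrable (fun p : Ω × Ω => (f p.1 * g p.1 * w p.1) * w p.2) (P.prod P) :=
    hfg.mul_prod h1
  have hB : Integrable (fun p : Ω × Ω => w p.1 * (f p.2 * g p.2 * w p.2)) (P.prod P) :=
    h1.mul_prod hfg
  have hC : Integrable (fun p : Ω × Ω => (f p.1 * w p.1) * (g p.2 * w p.2)) (P.prod P) :=
    hf.mul_prod hg
  have hD : Integrable (fun p : Ω × Ω => (g p.1 * w p.1) * (f p.2 * w p.2)) (P.prod P) :=
    hg.mul_prod hf
  have expand : (fun p : Ω × Ω => (f p.1 - f p.2) * (g p.1 - g p.2) * (w p.1 * w p.2)) =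
      fun p => ((f p.1 * g p.1 * w p.1) * w p.2 + w p.1 * (f p.2 * g p.2 * w p.2)) -
        ((f p.1 * w p.1) * (g p.2 * w p.2) + (g p.1 * w p.1) * (f p.2 * w p.2)) := by
    funext p; ring
  have e1 := integral_sub (hA.add hB) (hC.add hD)
  simp only [Pi.add_apply] at e1
  rw [expand, e1, integral_add hA hB, integral_add hC hD,
    integral_prod_mul (fun ω => f ω * g ω * w ω) w, integral_prod_mul w (fun ω => f ω * g ω * w ω),
    integral_prod_mul (fun ω => f ω * w ω) (fun ω => g ω * w ω),
    integral_prod_mul (fun ω => g ω * w ω) (fun ω => f ω * w ω)] at key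
  nlinarith [key]

/-- For a nonnegative random variable `X` with all moments `E[X^m e^{LX}]` finite, and any
finite family of pairs `(lᵢ, rᵢ)` with `lᵢ ∈ [0,L]` and `rᵢ ∈ ℕ`, one has
`∏ᵢ G(lᵢ, rᵢ) ≤ G(L, ∑ᵢ rᵢ)`, where `G(l,k) = E[X^k e^{lX}] / E[e^{lX}]`. -/
theorem prod_le_G_sum {Ω : Type*} [MeasurableSpace Ω] (P : Measure Ω)
    [IsProbabilityMeasure P] (X : Ω → ℝ) (hX : Measurable X) (hXnn : ∀ ω, 0 ≤ X ω)
    (L : ℝ) (hL : 0 ≤ L)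
    (hint : ∀ m : ℕ, Integrable (fun ω => X ω ^ m * Real.exp (L * X ω)) P)
    {ι : Type*} (s : Finset ι) (l : ι → ℝ) (r : ι → ℕ)
    (hl : ∀ i ∈ s, l i ∈ Set.Icc 0 L) :
    (∏ i ∈ s,
        (∫ ω, X ω ^ r i * Real.exp (l i * X ω) ∂P) / ∫ ω, Real.exp (l i * X ω) ∂P) ≤
      (∫ ω, X ω ^ (∑ i ∈ s, r i) * Real.exp (L * X ω) ∂P) /
        ∫ ω, Real.exp (L * X ω) ∂P := by
  classical
  -- integrability of the moments for any tilt parameter in [0, L]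
  have intmom : ∀ (k : ℕ) (t : ℝ), 0 ≤ t → t ≤ L →
      Integrable (fun ω => X ω ^ k * Real.exp (t * X ω)) P := by
    intro k t ht0 htL
    refine (hint k).mono
      (((hX.pow_const k).mul ((hX.const_mul t).exp)).aestronglyMeasurable)
      (Filter.Eventually.of_forall fun ω => ?_)
    have hx := hXnn ω
    have h1 : (0:ℝ) ≤ X ω ^ k * Real.exp (t * X ω) :=
      mul_nonneg (pow_nonneg hx _) (Real.exp_pos _).le
    have h2 : (0:ℝ) ≤ X ω ^ k * Real.exp (L * X ω) :=
      mul_nonneg (pow_nonneg hx _) (Real.exp_pos _).le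
    rw [Real.norm_eq_abs, Real.norm_eq_abs, abs_of_nonneg h1, abs_of_nonneg h2]
    exact mul_le_mul_of_nonneg_left
      (Real.exp_le_exp.2 (mul_le_mul_of_nonneg_right htL hx)) (pow_nonneg hx _)
  have intexp : ∀ (t : ℝ), 0 ≤ t → t ≤ L →
      Integrable (fun ω => Real.exp (t * X ω)) P := by
    intro t ht0 htL
    simpa using intmom 0 t ht0 htL
  have Epos : ∀ (t : ℝ), 0 ≤ t → t ≤ L → 0 < ∫ ω, Real.exp (t * X ω) ∂P := by
    intro t ht0 htL
    rw [integral_pos_iff_support_of_nonneg_ae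
      (Filter.Eventually.of_forall fun ω => (Real.exp_pos _).le) (intexp t ht0 htL)]
    have : Function.support (fun ω => Real.exp (t * X ω)) = Set.univ := by
      ext ω; simp [Real.exp_ne_zero]
    simp [this]
  -- monotonicity in the tilt parameter
  have lemA : ∀ (k : ℕ) (t : ℝ), 0 ≤ t → t ≤ L →
      (∫ ω, X ω ^ k * Real.exp (t * X ω) ∂P) / (∫ ω, Real.exp (t * X ω) ∂P) ≤
      (∫ ω, X ω ^ k * Real.exp (L * X ω) ∂P) / (∫ ω, Real.exp (L * X ω) ∂P) := by
    intro k t ht0 htL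
    have eg : (fun ω => Real.exp ((L - t) * X ω) * Real.exp (t * X ω)) =
        fun ω => Real.exp (L * X ω) := by
      funext ω; rw [← Real.exp_add]; ring_nf
    have efg : (fun ω => X ω ^ k * Real.exp ((L - t) * X ω) * Real.exp (t * X ω)) =
        fun ω => X ω ^ k * Real.exp (L * X ω) := by
      funext ω; rw [mul_assoc, ← Real.exp_add]; ring_nf
    have key := cheb_aux (P := P) (f := fun ω => X ω ^ k)
      (g := fun ω => Real.exp ((L - t) * X ω)) (w := fun ω => Real.exp (t * X ω))
      (fun ω => (Real.exp_pos _).le)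
      (by
        intro ω ω'
        rcases le_total (X ω) (X ω') with h | h
        · apply mul_nonneg_of_nonpos_of_nonpos
          · exact sub_nonpos.2 (pow_le_pow_left₀ (hXnn ω) h k)
          · exact sub_nonpos.2 (Real.exp_le_exp.2
              (mul_le_mul_of_nonneg_left h (by linarith)))
        · refine mul_nonneg (sub_nonneg.2 (pow_le_pow_left₀ (hXnn ω') h k))
            (sub_nonneg.2 (Real.exp_le_exp.2
              (mul_le_mul_of_nonneg_left h (by linarith))))
      )
      (intexp t ht0 htL) (intmom k t ht0 htL)
      (by rw [eg]; exact intexp L hL le_rfl)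
      (by rw [efg]; exact hint k)
    rw [eg, efg] at key
    rw [div_le_div_iff₀ (Epos t ht0 htL) (Epos L hL le_rfl)]
    exact key
  -- submultiplicativity of moments at tilt L
  have lemB : ∀ a b : ℕ,
      ((∫ ω, X ω ^ a * Real.exp (L * X ω) ∂P) / (∫ ω, Real.exp (L * X ω) ∂P)) *
        ((∫ ω, X ω ^ b * Real.exp (L * X ω) ∂P) / (∫ ω, Real.exp (L * X ω) ∂P)) ≤
      (∫ ω, X ω ^ (a + b) * Real.exp (L * X ω) ∂P) / (∫ ω, Real.exp (L * X ω) ∂P) := by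
    intro a b
    have efg : (fun ω => X ω ^ a * X ω ^ b * Real.exp (L * X ω)) =
        fun ω => X ω ^ (a + b) * Real.exp (L * X ω) := by
      funext ω; rw [pow_add]
    have key := cheb_aux (P := P) (f := fun ω => X ω ^ a)
      (g := fun ω => X ω ^ b) (w := fun ω => Real.exp (L * X ω))
      (fun ω => (Real.exp_pos _).le)
      (by
        intro ω ω'
        rcases le_total (X ω) (X ω') with h | h
        · apply mul_nonneg_of_nonpos_of_nonpos
          · exact sub_nonpos.2 (pow_le_pow_left₀ (hXnn ω) h a)
          · exact sub_nonpos.2 (pow_le_pow_left₀ (hXnn ω) h b)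
        · exact mul_nonneg (sub_nonneg.2 (pow_le_pow_left₀ (hXnn ω') h a))
            (sub_nonneg.2 (pow_le_pow_left₀ (hXnn ω') h b)))
      (intexp L hL le_rfl) (hint a) (hint b)
      (by rw [efg]; exact hint (a + b))
    rw [efg] at key
    have hE := Epos L hL le_rfl
    rw [div_mul_div_comm, div_le_div_iff₀ (mul_pos hE hE) hE]
    nlinarith [key, hE]
  -- nonnegativity of the G-values
  have Gnn : ∀ (k : ℕ) (t : ℝ),
      0 ≤ (∫ ω, X ω ^ k * Real.exp (t * X ω) ∂P) / (∫ ω, Real.exp (t * X ω) ∂P) :=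
    fun k t => div_nonneg
      (integral_nonneg fun ω => mul_nonneg (pow_nonneg (hXnn ω) _) (Real.exp_pos _).le)
      (integral_nonneg fun ω => (Real.exp_pos _).le)
  induction s using Finset.induction_on with
  | empty =>
      simp only [Finset.prod_empty, Finset.sum_empty, pow_zero, one_mul]
      rw [div_self (ne_of_gt (Epos L hL le_rfl))]
  | insert a s' hni ih =>
      have hmem : ∀ i ∈ s', l i ∈ Set.Icc 0 L := fun i hi => hl i (Finset.mem_insert_of_mem hi)
      have ih' := ih hmem
      rw [Finset.prod_insert hni, Finset.sum_insert hni]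
      have hla := hl a (Finset.mem_insert_self a s')
      calc ((∫ ω, X ω ^ r a * Real.exp (l a * X ω) ∂P) / ∫ ω, Real.exp (l a * X ω) ∂P) *
            ∏ i ∈ s', (∫ ω, X ω ^ r i * Real.exp (l i * X ω) ∂P) /
              ∫ ω, Real.exp (l i * X ω) ∂P
          ≤ ((∫ ω, X ω ^ r a * Real.exp (L * X ω) ∂P) / ∫ ω, Real.exp (L * X ω) ∂P) *
            ((∫ ω, X ω ^ (∑ i ∈ s', r i) * Real.exp (L * X ω) ∂P) /
              ∫ ω, Real.exp (L * X ω) ∂P) := by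
            apply mul_le_mul (lemA (r a) (l a) hla.1 hla.2) ih'
              (Finset.prod_nonneg fun i _ => Gnn _ _) (Gnn _ _)
        _ ≤ (∫ ω, X ω ^ (r a + ∑ i ∈ s', r i) * Real.exp (L * X ω) ∂P) /
              ∫ ω, Real.exp (L * X ω) ∂P := lemB _ _
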